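/- The mechanism DAVID-Q is ordinally strategy-proof: for every student i, every profile of sub-college rank-ordered lists submitted by the other students, and every set T ⊆ C of colleges whose disclosure sub-colleges i includes in her list, the outcome (college or ∅) that i receives from submitting the sub-college rank-ordered list that contains the regular sub-colleges of all colleges ordered according to her true strict preferences over colleges, with the disclosure sub-college c^{vid} placed immediately after c^r for each c ∈ T, is weakly preferred under her true preferences to her outcome from submitting any other rank-ordered list of the same set of sub-colleges in a different order. -/

import Mathlib

open scoped Classical
set_option linter.unusedSectionVars false
set_option maxHeartbeats 1000000

noncomputable section

/-- The college (entry of her rank-ordered list) to which student `i` currently proposes,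
given that `p i` entries of her list have already rejected her.  `none` means she has
exhausted her list and proposes to no college. -/
def proposesTo {I C : Type} (R : I → List C) (p : I → ℕ) (i : I) : Option C :=
  (R i)[p i]?

/-- Student `i` is rejected in the current round: she proposes to some college `c` and at
least `S c` students proposing to `c` have strictly higher priority at `c` than `i`
(so `i` is not among the `S c` highest-priority applicants held by `c`). -/
def isRejected {I C : Type} [Fintype I] (S : C → ℕ) (R : I → List C)
    (prio : C → I → ℝ) (p : I → ℕ) (i : I) : Prop :=
  ∃ c, proposesTo R p i = some c ∧
    S c ≤ (Finset.univ.filter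
      (fun j : I => proposesTo R p j = some c ∧ prio c i < prio c j)).card

/-- One round of student-proposing deferred acceptance: every rejected student moves on
to the next entry of her rank-ordered list. -/
def daStep {I C : Type} [Fintype I] (S : C → ℕ) (R : I → List C)
    (prio : C → I → ℝ) (p : I → ℕ) : I → ℕ :=
  fun i => if isRejected S R prio p i then p i + 1 else p i

/-- Student-proposing deferred acceptance (SPDA): iterate the rejection rounds until a
fixed point is reached (which happens within `∑ i, ((R i).length + 1)` rounds, since every
non-terminal round strictly increases some student's pointer, each of which is bounded by
the length of her list).  The resulting matching sends student `i` to the college holding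
her at termination, or to `none` (unmatched) if she exhausted her list. -/
def SPDA {I C : Type} [Fintype I] (S : C → ℕ) (R : I → List C)
    (prio : C → I → ℝ) : I → Option C :=
  proposesTo R ((daStep S R prio)^[∑ i : I, ((R i).length + 1)] fun _ => 0)

/-! In DAVID-Q each college `c : C` is split into two sub-colleges, modelled as pairs
`(c, b) : C × Bool`: the regular sub-college `(c, false)` (priority = eligibility score,
capacity `Sr c`) and the disclosure sub-college `(c, true)` (priority = payoff,
capacity `Sd c`).  SPDA is run at the sub-college level and a student matched to a
sub-college of `c` is matched to `c`. -/

/-- Capacities of the sub-colleges. -/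
def subCap {C : Type} (Sr Sd : C → ℕ) : C × Bool → ℕ :=
  fun s => if s.2 then Sd s.1 else Sr s.1

/-- Priorities of the sub-colleges: the regular sub-college of `c` ranks student `j` by
the eligibility score `e j c`; the disclosure sub-college ranks `j` by the payoff
`w j c` (revealed after information disclosure). -/
def subPrio {I C : Type} (e w : I → C → ℝ) : C × Bool → I → ℝ :=
  fun s j => if s.2 then w j s.1 else e j s.1

/-- The sub-college rank-ordered list built from a list `L` of colleges and a set
`T` of colleges targeted with information disclosure: the regular sub-colleges appear
in the order of `L`, and for each `c ∈ T` the disclosure sub-college of `c` is placed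
immediately after its regular sub-college. -/
def subROL {C : Type} [DecidableEq C] (L : List C) (T : Finset C) : List (C × Bool) :=
  L.flatMap fun c => if c ∈ T then [(c, false), (c, true)] else [(c, false)]

/-- `L` is the rank-ordered list that lists all colleges in the order of the true strict
preferences represented by the injective utility function `u : Option C → ℝ`
(`u none` is the utility of being unmatched). -/
def IsTruthfulROL {C : Type} (u : Option C → ℝ) (L : List C) : Prop :=
  (∀ c : C, c ∈ L) ∧ L.Pairwise fun a b => u (some b) < u (some a)

namespace DAAux

variable {I CC : Type} [Fintype I] [DecidableEq I] [DecidableEq CC]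
  (S : CC → ℕ) (R : I → List CC) (prio : CC → I → ℝ)

/-- state after `t` rounds -/
def it (t : ℕ) : I → ℕ := (daStep S R prio)^[t] (fun _ => 0)

def NN : ℕ := ∑ j : I, ((R j).length + 1)

def pf : I → ℕ := it S R prio (NN R)

lemma it_succ (t : ℕ) : it S R prio (t + 1) = daStep S R prio (it S R prio t) :=
  Function.iterate_succ_apply' _ _ _

lemma spda_eq : SPDA S R prio = proposesTo R (pf S R prio) := rfl

lemma it_le_succ (t : ℕ) (j : I) : it S R prio t j ≤ it S R prio (t + 1) j := by
  rw [it_succ]; unfold daStep; split <;> omega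

lemma it_mono {t t' : ℕ} (h : t ≤ t') (j : I) : it S R prio t j ≤ it S R prio t' j := by
  induction t' with
  | zero =>
    have : t = 0 := by omega
    simp [this]
  | succ n ih =>
    rcases Nat.lt_or_ge t (n+1) with h'|h'
    · exact le_trans (ih (by omega)) (it_le_succ S R prio n j)
    · have h2 : t = n + 1 := by omega
      simp [h2]

lemma it_le_len (t : ℕ) (j : I) : it S R prio t j ≤ (R j).length := by
  induction t with
  | zero => simp [it]
  | succ n ih =>
    rw [it_succ]; unfold daStep
    split
    · rename_i h
      obtain ⟨c, hc, -⟩ := h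
      have := (List.getElem?_eq_some_iff.1 hc).1
      omega
    · exact ih

lemma it_step_cases (t : ℕ) (j : I) :
    it S R prio (t+1) j = it S R prio t j ∨ it S R prio (t+1) j = it S R prio t j + 1 := by
  rw [it_succ]; unfold daStep; split
  · right; rfl
  · left; rfl

lemma step_rej {t : ℕ} {j : I} (h : it S R prio (t+1) j ≠ it S R prio t j) :
    isRejected S R prio (it S R prio t) j ∧ it S R prio (t+1) j = it S R prio t j + 1 := by
  have h1 : it S R prio (t+1) j =
      if isRejected S R prio (it S R prio t) j then it S R prio t j + 1
      else it S R prio t j := by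
    rw [it_succ]; rfl
  by_cases hr : isRejected S R prio (it S R prio t) j
  · rw [if_pos hr] at h1; exact ⟨hr, h1⟩
  · rw [if_neg hr] at h1; exact absurd h1 h

lemma fixed_point (i0 : I) : daStep S R prio (pf S R prio) = pf S R prio := by
  -- there is t < NN with it (t+1) = it t
  have hex : ∃ t < NN (R := R), it S R prio (t+1) = it S R prio t := by
    by_contra hc
    push_neg at hc
    have key : ∀ t ≤ NN (R := R), t ≤ ∑ j : I, it S R prio t j := by
      intro t ht
      induction t with
      | zero => simp
      | succ n ih =>
        have h1 : n ≤ ∑ j : I, it S R prio n j := ih (by omega)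
        have hne := hc n (by omega)
        have : ∃ j, it S R prio (n+1) j ≠ it S R prio n j := by
          by_contra h; push_neg at h
          exact hne (funext h)
        obtain ⟨j, hj⟩ := this
        have hlt : ∑ j : I, it S R prio n j < ∑ j : I, it S R prio (n+1) j := by
          apply Finset.sum_lt_sum (fun k _ => it_le_succ S R prio n k)
          exact ⟨j, Finset.mem_univ j, by have := it_le_succ S R prio n j; omega⟩
        omega
    have h1 := key (NN (R := R)) le_rfl
    have h2 : ∑ j : I, it S R prio (NN (R := R)) j ≤ ∑ j : I, (R j).length :=
      Finset.sum_le_sum (fun j _ => it_le_len S R prio _ j)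
    have h3 : (∑ j : I, (R j).length) < NN (R := R) := by
      unfold NN
      have : ∑ j : I, ((R j).length + 1) = (∑ j : I, (R j).length) + Fintype.card I := by
        rw [Finset.sum_add_distrib]; simp
      have hcard : 0 < Fintype.card I := Fintype.card_pos_iff.2 ⟨i0⟩
      omega
    omega
  obtain ⟨t, ht, hfix⟩ := hex
  have stab : ∀ m, it S R prio (t + m) = it S R prio t := by
    intro m
    induction m with
    | zero => rfl
    | succ n ih =>
      have he : t + (n+1) = (t+n) + 1 := rfl
      rw [he, it_succ, ih, ← it_succ, hfix]
  have hNt : it S R prio (NN (R := R)) = it S R prio t := by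
    have := stab (NN (R := R) - t)
    rwa [Nat.add_sub_cancel' (le_of_lt ht)] at this
  show daStep S R prio (it S R prio (NN (R := R))) = it S R prio (NN (R := R))
  rw [hNt, ← it_succ, hfix]

lemma not_rejected_final (i0 : I) (j : I) : ¬ isRejected S R prio (pf S R prio) j := by
  intro h
  have := congrFun (fixed_point S R prio i0) j
  unfold daStep at this
  simp [h] at this

lemma it_stab (i0 : I) {t : ℕ} (h : NN (R := R) ≤ t) : it S R prio t = pf S R prio := by
  have : ∀ m, it S R prio (NN (R := R) + m) = pf S R prio := by
    intro m; induction m with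
    | zero => rfl
    | succ n ih =>
      have he : NN (R := R) + (n+1) = (NN (R := R)+n) + 1 := rfl
      rw [he, it_succ, ih, fixed_point S R prio i0]
  have h2 := this (t - NN (R := R))
  rwa [Nat.add_sub_cancel' h] at h2

/-- reach: if q < final pointer, there is a round with pointer exactly q and a rejection -/
lemma reach (j : I) {q : ℕ} (hq : q < pf S R prio j) :
    ∃ t < NN (R := R), it S R prio t j = q ∧ isRejected S R prio (it S R prio t) j := by
  have main : ∀ n, q < it S R prio n j →
      ∃ t < n, it S R prio t j = q ∧ it S R prio (t+1) j = q + 1 := by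
    intro n
    induction n with
    | zero => intro h; simp [it] at h
    | succ m ih =>
      intro h
      rcases Nat.lt_or_ge q (it S R prio m j) with h'|h'
      · obtain ⟨t, ht, h1, h2⟩ := ih h'
        exact ⟨t, by omega, h1, h2⟩
      · rcases it_step_cases S R prio m j with hc|hc
        · omega
        · have : it S R prio m j = q := by omega
          exact ⟨m, by omega, this, by omega⟩
  obtain ⟨t, ht, h1, h2⟩ := main _ hq
  refine ⟨t, ht, h1, ?_⟩
  have := step_rej S R prio (j := j) (t := t) (by omega)
  exact this.1

/-- set of students proposing to `c` with priority above `x` at round `t` -/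
def cntset (c : CC) (x : ℝ) (t : ℕ) : Finset I :=
  Finset.univ.filter (fun m => proposesTo R (it S R prio t) m = some c ∧ x < prio c m)

lemma keepers_card {I' : Type} [DecidableEq I'] (n : ℕ) (B : Finset I') (f : I' → ℝ)
    (hf : Function.Injective f) (hn : n ≤ B.card) :
    n ≤ (B.filter fun j => (B.filter fun m => f j < f m).card < n).card := by
  classical
  set r : I' → ℕ := fun j => (B.filter fun m => f j < f m).card with hr
  have hrlt : ∀ j ∈ B, r j < B.card := by
    intro j hj
    have hsub : (B.filter fun m => f j < f m) ⊆ B.erase j := by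
      intro m hm
      simp only [Finset.mem_filter] at hm
      refine Finset.mem_erase.2 ⟨?_, hm.1⟩
      intro he; subst he; exact lt_irrefl _ hm.2
    calc r j ≤ (B.erase j).card := Finset.card_le_card hsub
      _ < B.card := by
          rw [Finset.card_erase_of_mem hj]
          have : 0 < B.card := Finset.card_pos.2 ⟨j, hj⟩
          omega
  have hinj : Set.InjOn r B := by
    intro a ha b hb hab
    by_contra hne
    have hfne : f a ≠ f b := fun h => hne (hf h)
    rcases lt_or_gt_of_ne hfne with h|h
    · have hsub : insert b (B.filter fun m => f b < f m) ⊆ (B.filter fun m => f a < f m) := by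
        intro m hm
        rcases Finset.mem_insert.1 hm with he|hm
        · subst he; exact Finset.mem_filter.2 ⟨hb, h⟩
        · have := Finset.mem_filter.1 hm
          exact Finset.mem_filter.2 ⟨this.1, lt_trans h this.2⟩
      have : r b + 1 ≤ r a := by
        have hc := Finset.card_le_card hsub
        rwa [Finset.card_insert_of_notMem (by simp)] at hc
      omega
    · have hsub : insert a (B.filter fun m => f a < f m) ⊆ (B.filter fun m => f b < f m) := by
        intro m hm
        rcases Finset.mem_insert.1 hm with he|hm
        · subst he; exact Finset.mem_filter.2 ⟨ha, h⟩
        · have := Finset.mem_filter.1 hm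
          exact Finset.mem_filter.2 ⟨this.1, lt_trans h this.2⟩
      have : r a + 1 ≤ r b := by
        have hc := Finset.card_le_card hsub
        rwa [Finset.card_insert_of_notMem (by simp)] at hc
      omega
  have himg : B.image r = Finset.range B.card := by
    apply Finset.eq_of_subset_of_card_le
    · intro x hx
      obtain ⟨j, hj, hje⟩ := Finset.mem_image.1 hx
      exact Finset.mem_range.2 (hje ▸ hrlt j hj)
    · rw [Finset.card_range, Finset.card_image_of_injOn hinj]
  have hfe : (B.filter fun j => r j < n).card = ((B.image r).filter (fun x => x < n)).card := by
    rw [Finset.filter_image]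
    rw [Finset.card_image_of_injOn (hinj.mono (Finset.filter_subset _ _))]
  rw [show (B.filter fun j => (B.filter fun m => f j < f m).card < n) = (B.filter fun j => r j < n) from rfl]
  rw [hfe, himg]
  have : (Finset.range B.card).filter (fun x => x < n) = Finset.range n := by
    ext x; simp only [Finset.mem_filter, Finset.mem_range]
    constructor
    · rintro ⟨-, h⟩; exact h
    · intro h; exact ⟨by omega, h⟩
  rw [this, Finset.card_range]

lemma cnt_key {c : CC} {x : ℝ} {t : ℕ} (hprio : Function.Injective (prio c))
    (h : S c ≤ (cntset S R prio c x t).card) :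
    ∃ K : Finset I, K ⊆ cntset S R prio c x (t+1) ∧ S c ≤ K.card ∧
      ∀ j ∈ K, proposesTo R (it S R prio t) j = some c := by
  classical
  set Bt := cntset S R prio c x t with hBt
  set K := Bt.filter (fun j => (Bt.filter fun m => prio c j < prio c m).card < S c) with hK
  have hKcard : S c ≤ K.card := keepers_card (S c) Bt (prio c) hprio h
  have hKmem : ∀ j ∈ K, proposesTo R (it S R prio t) j = some c ∧ x < prio c j := by
    intro j hj
    have := Finset.mem_filter.1 ((Finset.filter_subset _ _) hj)
    exact this.2
  have hKnr : ∀ j ∈ K, ¬ isRejected S R prio (it S R prio t) j := by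
    intro j hj hrej
    obtain ⟨c', hp', hcard'⟩ := hrej
    have hp : proposesTo R (it S R prio t) j = some c := (hKmem j hj).1
    have hcc : c' = c := by rw [hp] at hp'; exact (Option.some.inj hp').symm
    rw [hcc] at hcard'
    have hle : S c ≤ (Bt.filter (fun m => prio c j < prio c m)).card := by
      refine le_trans hcard' (Finset.card_le_card ?_)
      intro m hm
      simp only [Finset.mem_filter, Finset.mem_univ, true_and] at hm
      obtain ⟨h1, h2⟩ := hm
      refine Finset.mem_filter.2 ⟨?_, h2⟩
      exact Finset.mem_filter.2 ⟨Finset.mem_univ _, h1, lt_trans (hKmem j hj).2 h2⟩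
    have := (Finset.mem_filter.1 hj).2
    omega
  refine ⟨K, ?_, hKcard, fun j hj => (hKmem j hj).1⟩
  intro j hj
  have hsame : it S R prio (t+1) j = it S R prio t j := by
    rw [it_succ]; unfold daStep; rw [if_neg (hKnr j hj)]
  simp only [cntset, Finset.mem_filter, Finset.mem_univ, true_and]
  constructor
  · show (R j)[it S R prio (t+1) j]? = some c
    rw [hsame]; exact (hKmem j hj).1
  · exact (hKmem j hj).2

lemma cnt_mono {c : CC} {x : ℝ} {t t' : ℕ} (hprio : Function.Injective (prio c))
    (htt : t ≤ t') (h : S c ≤ (cntset S R prio c x t).card) :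
    S c ≤ (cntset S R prio c x t').card := by
  induction t' with
  | zero =>
    have : t = 0 := by omega
    subst this; exact h
  | succ n ih =>
    rcases Nat.lt_or_ge t (n+1) with h'|h'
    · obtain ⟨K, hK1, hK2, -⟩ := cnt_key S R prio hprio (ih (by omega))
      exact le_trans hK2 (Finset.card_le_card hK1)
    · have : t = n + 1 := by omega
      subst this; exact h

/-- the set of students finally matched to `c` -/
def matchedset (c : CC) : Finset I :=
  Finset.univ.filter (fun m => proposesTo R (pf S R prio) m = some c)

lemma matched_card_le (i0 : I) {c : CC} (hprio : Function.Injective (prio c)) :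
    (matchedset S R prio c).card ≤ S c := by
  by_contra hcon
  push_neg at hcon
  have hne : (matchedset S R prio c).Nonempty := Finset.card_pos.1 (by omega)
  obtain ⟨m, hm, hmin⟩ := Finset.exists_min_image (matchedset S R prio c) (prio c) hne
  have hrej : isRejected S R prio (pf S R prio) m := by
    refine ⟨c, (Finset.mem_filter.1 hm).2, ?_⟩
    have h2 : S c ≤ ((matchedset S R prio c).erase m).card := by
      rw [Finset.card_erase_of_mem hm]; omega
    refine le_trans h2 (Finset.card_le_card ?_)
    intro k hk
    obtain ⟨hkm, hkmem⟩ := Finset.mem_erase.1 hk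
    have hk2 := (Finset.mem_filter.1 hkmem).2
    simp only [Finset.mem_filter, Finset.mem_univ, true_and]
    refine ⟨hk2, ?_⟩
    have hle := hmin k hkmem
    rcases lt_or_eq_of_le hle with h|h
    · exact h
    · exact ((Ne.symm hkm) (hprio h)).elim
  exact not_rejected_final S R prio i0 m hrej

/-- CORE: if student `j`'s final pointer passed position `q`, then the college at
position `q` of her list is full with students she cannot beat. -/
lemma core (i0 : I) {j : I} {q : ℕ} {c : CC} (hprio : Function.Injective (prio c))
    (hq : q < pf S R prio j) (hc : (R j)[q]? = some c) :
    (∀ m, proposesTo R (pf S R prio) m = some c → prio c j < prio c m) ∧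
      S c ≤ (matchedset S R prio c).card := by
  obtain ⟨t, ht, hits, hrej⟩ := reach S R prio j hq
  obtain ⟨c', hp', hcard'⟩ := hrej
  have hpc : proposesTo R (it S R prio t) j = some c := by
    show (R j)[it S R prio t j]? = some c
    rw [hits]; exact hc
  have hcc : c' = c := by rw [hpc] at hp'; exact (Option.some.inj hp').symm
  rw [hcc] at hcard'
  have hstart : S c ≤ (cntset S R prio c (prio c j) t).card := by
    refine le_trans hcard' (Finset.card_le_card ?_)
    intro m hm
    simp only [Finset.mem_filter, Finset.mem_univ, true_and] at hm
    exact Finset.mem_filter.2 ⟨Finset.mem_univ _, hm.1, hm.2⟩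
  have hfin : S c ≤ (cntset S R prio c (prio c j) (NN (R := R))).card :=
    cnt_mono S R prio hprio (by omega) hstart
  have hsub : cntset S R prio c (prio c j) (NN (R := R)) ⊆ matchedset S R prio c := by
    intro m hm
    have := Finset.mem_filter.1 hm
    exact Finset.mem_filter.2 ⟨Finset.mem_univ _, this.2.1⟩
  have hmc := matched_card_le S R prio i0 (c := c) hprio
  have hsc := Finset.card_le_card hsub
  have heq : cntset S R prio c (prio c j) (NN (R := R)) = matchedset S R prio c :=
    Finset.eq_of_subset_of_card_le hsub (by omega)
  constructor
  · intro m hmm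
    have : m ∈ matchedset S R prio c := Finset.mem_filter.2 ⟨Finset.mem_univ _, hmm⟩
    rw [← heq] at this
    exact (Finset.mem_filter.1 this).2.2
  · omega

lemma pf_le_len (j : I) : pf S R prio j ≤ (R j).length := it_le_len S R prio _ j

lemma rej_to_cnt {t : ℕ} {j : I} {c : CC} (hp : proposesTo R (it S R prio t) j = some c)
    (hrej : isRejected S R prio (it S R prio t) j) :
    S c ≤ (cntset S R prio c (prio c j) t).card := by
  obtain ⟨c', hp', hcard'⟩ := hrej
  have hcc : c' = c := by rw [hp] at hp'; exact (Option.some.inj hp').symm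
  rw [hcc] at hcard'
  refine le_trans hcard' (Finset.card_le_card ?_)
  intro m hm
  simp only [Finset.mem_filter, Finset.mem_univ, true_and] at hm
  exact Finset.mem_filter.2 ⟨Finset.mem_univ _, hm.1, hm.2⟩

lemma mk_rejected {t : ℕ} {j : I} {c : CC} (hp : proposesTo R (it S R prio t) j = some c)
    (h : S c ≤ (cntset S R prio c (prio c j) t).card) :
    isRejected S R prio (it S R prio t) j := by
  refine ⟨c, hp, le_trans h (Finset.card_le_card ?_)⟩
  intro m hm
  have hm' := Finset.mem_filter.1 hm
  simp only [Finset.mem_filter, Finset.mem_univ, true_and]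
  exact hm'.2

lemma it_le_pf (i0 : I) (t : ℕ) (j : I) : it S R prio t j ≤ pf S R prio j := by
  rcases le_or_gt t (NN (R := R)) with h|h
  · exact it_mono S R prio h j
  · rw [it_stab S R prio i0 (le_of_lt h)]

/-- first round at which `j`'s pointer reaches its final value -/
def arr (j : I) : ℕ := Nat.find (⟨NN (R := R), rfl⟩ : ∃ t, it S R prio t j = pf S R prio j)

lemma arr_spec (j : I) : it S R prio (arr S R prio j) j = pf S R prio j :=
  Nat.find_spec (⟨NN (R := R), rfl⟩ : ∃ t, it S R prio t j = pf S R prio j)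

lemma lt_arr (i0 : I) {t : ℕ} {j : I} (h : t < arr S R prio j) :
    it S R prio t j < pf S R prio j := by
  have hne : it S R prio t j ≠ pf S R prio j :=
    Nat.find_min (⟨NN (R := R), rfl⟩ : ∃ t, it S R prio t j = pf S R prio j) h
  have := it_le_pf S R prio i0 t j
  omega

/-- positions in a list, with `none` ↦ length -/
def posO (l : List CC) : Option CC → ℕ
  | none => l.length
  | some c => l.idxOf c

lemma nodup_getElem?_inj {l : List CC} (hnd : l.Nodup) {p q : ℕ} {c : CC}
    (hp : l[p]? = some c) (hq : l[q]? = some c) : p = q := by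
  obtain ⟨hp1, hp2⟩ := List.getElem?_eq_some_iff.1 hp
  obtain ⟨hq1, hq2⟩ := List.getElem?_eq_some_iff.1 hq
  have e1 := List.Nodup.idxOf_getElem hnd p hp1
  have e2 := List.Nodup.idxOf_getElem hnd q hq1
  rw [hp2] at e1; rw [hq2] at e2; omega

lemma posO_spda (hnd : ∀ k, (R k).Nodup) (k : I) :
    posO (R k) (SPDA S R prio k) = pf S R prio k := by
  rcases Nat.lt_or_ge (pf S R prio k) (R k).length with h|h
  · have : SPDA S R prio k = some ((R k)[pf S R prio k]) := List.getElem?_eq_getElem h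
    rw [this]
    show (R k).idxOf _ = _
    exact List.Nodup.idxOf_getElem (hnd k) _ h
  · have hlen : pf S R prio k = (R k).length := le_antisymm (pf_le_len S R prio k) h
    have : SPDA S R prio k = none := by
      show (R k)[pf S R prio k]? = none
      rw [List.getElem?_eq_none]; omega
    rw [this, posO, hlen]

lemma posO_some_lt_of_mem {l : List CC} {c : CC} (h : c ∈ l) : posO l (some c) < l.length :=
  List.idxOf_lt_length_iff.2 h

lemma getElem?_posO {l : List CC} {c : CC} (h : c ∈ l) : l[posO l (some c)]? = some c := by
  have hlt : l.idxOf c < l.length := List.idxOf_lt_length_iff.2 h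
  show l[l.idxOf c]? = some c
  rw [List.getElem?_eq_getElem hlt]
  exact congrArg some (List.getElem_idxOf hlt)

lemma spda_some_elim {k : I} {c : CC} (h : SPDA S R prio k = some c) :
    pf S R prio k < (R k).length ∧ (R k)[pf S R prio k]? = some c :=
  ⟨(List.getElem?_eq_some_iff.1 h).1, h⟩


/-- **Key lemma** (strategy-proofness core): if `Q` and `Q'` are list-profiles that agree
off student `i`, then the match of `i` under `Q'` occurs in `i`'s `Q`-list no earlier
than the entry `i` obtains under `Q`. -/
theorem block (S : CC → ℕ) (prio : CC → I → ℝ) (hprio : ∀ c, Function.Injective (prio c))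
    (i : I) (Q Q' : I → List CC) (hQ : ∀ j, j ≠ i → Q j = Q' j)
    (hnd : ∀ j, (Q j).Nodup) (hnd' : ∀ j, (Q' j).Nodup) :
    pf S Q prio i ≤ posO (Q i) (SPDA S Q' prio i) := by
  classical
  by_contra hcon
  push_neg at hcon
  set μ : I → Option CC := SPDA S Q prio with hμ
  set ν : I → Option CC := SPDA S Q' prio with hν
  set Sset : Finset I :=
    Finset.univ.filter (fun k => posO (Q k) (ν k) < pf S Q prio k) with hSset
  have iS : i ∈ Sset := Finset.mem_filter.2 ⟨Finset.mem_univ _, hcon⟩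
  -- data for members of Sset
  have F2 : ∀ k ∈ Sset, ∃ c, ν k = some c ∧ (Q k).idxOf c < pf S Q prio k ∧
      (Q k)[(Q k).idxOf c]? = some c := by
    intro k hk
    have hlt := (Finset.mem_filter.1 hk).2
    cases hνk : ν k with
    | none =>
      rw [hνk] at hlt
      have := pf_le_len S Q prio k
      simp only [posO] at hlt
      omega
    | some c =>
      rw [hνk] at hlt
      simp only [posO] at hlt
      have hlen : (Q k).idxOf c < (Q k).length :=
        lt_of_lt_of_le hlt (pf_le_len S Q prio k)
      refine ⟨c, rfl, hlt, ?_⟩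
      rw [List.getElem?_eq_getElem hlen]
      exact congrArg some (List.getElem_idxOf hlen)
  -- positions of own matches
  have F1 : ∀ k, posO (Q k) (μ k) = pf S Q prio k := posO_spda S Q prio hnd
  have F1' : ∀ k, posO (Q' k) (ν k) = pf S Q' prio k := posO_spda S Q' prio hnd'
  -- the two core consequences
  have coreQ : ∀ (j : I) (q : ℕ) (c : CC), q < pf S Q prio j → (Q j)[q]? = some c →
      (∀ m, μ m = some c → prio c j < prio c m) ∧
        S c ≤ (matchedset S Q prio c).card := by
    intro j q c hq hc
    exact core S Q prio i (hprio c) hq hc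
  have coreQ' : ∀ (j : I) (q : ℕ) (c : CC), q < pf S Q' prio j → (Q' j)[q]? = some c →
      (∀ m, ν m = some c → prio c j < prio c m) ∧
        S c ≤ (matchedset S Q' prio c).card := by
    intro j q c hq hc
    exact core S Q' prio i (hprio c) hq hc
  -- a final contradiction maker: an agent `h ≠ i` with justified envy at ν
  have envy : ∀ (h : I) (q : ℕ) (c : CC) (m : I), h ≠ i → q < posO (Q h) (ν h) →
      (Q h)[q]? = some c → ν m = some c → prio c m < prio c h → False := by
    intro h q c m hhi hq hc hm hpm
    have hQh : Q h = Q' h := hQ h hhi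
    rw [hQh] at hq hc
    rw [F1'] at hq
    have := (coreQ' h q c hq hc).1 m hm
    exact absurd hpm (by exact lt_asymm this)
  by_cases hcase : ∃ j ∈ Sset, ∃ k, μ k = ν j ∧ k ∉ Sset ∧ ν k ≠ ν j
  · -- Case 1
    obtain ⟨j, hjS, k, hμk, hkS, hνk⟩ := hcase
    obtain ⟨c, hνj, hidx, hget⟩ := F2 j hjS
    have hki : k ≠ i := fun he => hkS (he ▸ iS)
    rw [hνj] at hμk
    obtain ⟨hpfk, hgetk⟩ := spda_some_elim S Q prio hμk
    -- position of c in k's list equals pf k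
    have hq : (Q k).idxOf c = pf S Q prio k := by
      have := List.Nodup.idxOf_getElem (hnd k) _ hpfk
      rw [(List.getElem?_eq_some_iff.1 hgetk).2] at this
      omega
    -- k's envy position is before ν k
    have hqlt : pf S Q prio k < posO (Q k) (ν k) := by
      have hge : posO (Q k) (ν k) ≥ pf S Q prio k := by
        by_contra hx
        push_neg at hx
        exact hkS (Finset.mem_filter.2 ⟨Finset.mem_univ _, hx⟩)
      rcases lt_or_eq_of_le hge with h|h
      · exact h
      · exfalso
        cases hνkk : ν k with
        | none =>
          rw [hνkk] at h
          simp only [posO] at h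
          omega
        | some c'' =>
          rw [hνkk] at h
          simp only [posO] at h
          have hmem : c'' ∈ Q k := by
            by_contra hmm
            rw [List.idxOf_eq_length hmm] at h
            omega
          have hlen : (Q k).idxOf c'' < (Q k).length := List.idxOf_lt_length_iff.2 hmem
          have : (Q k)[(Q k).idxOf c'']? = some c'' := by
            rw [List.getElem?_eq_getElem hlen]
            exact congrArg some (List.getElem_idxOf hlen)
          rw [← h] at this
          have hcc : c'' = c := by
            rw [this] at hgetk; exact Option.some.inj hgetk
          exact hνk (by rw [hνkk, hcc, hνj])
    -- derive the two opposite priority comparisons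
    have h1 : prio c j < prio c k := (coreQ j _ c hidx hget).1 k hμk
    refine envy k (pf S Q prio k) c j hki hqlt hgetk hνj h1
  · -- Case 2
    push_neg at hcase
    have hcase2 : ∀ j ∈ Sset, ∀ k, μ k = ν j → k ∈ Sset ∨ ν k = ν j := by
      intro j hj k hk
      by_cases h : k ∈ Sset
      · exact Or.inl h
      · exact Or.inr (hcase j hj k hk h)
    -- Counting: every member of Sset is matched by μ to a ν-partner of some member
    set A : Finset (Option CC) := Sset.image ν with hA
    have hfib : ∀ α ∈ A, (Sset.filter (fun k => ν k = α)).card ≤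
        (Sset.filter (fun k => μ k = α)).card := by
      intro α hα
      obtain ⟨j, hjS, hje⟩ := Finset.mem_image.1 hα
      obtain ⟨c, hνj, hidx, hget⟩ := F2 j hjS
      have hαc : α = some c := by rw [← hje, hνj]
      subst hαc
      have hMfull : S c ≤ (matchedset S Q prio c).card := (coreQ j _ c hidx hget).2
      have hMle : (matchedset S Q prio c).card ≤ S c :=
        matched_card_le S Q prio i (hprio c)
      have hNle : (matchedset S Q' prio c).card ≤ S c :=
        matched_card_le S Q' prio i (hprio c)
      have hMeq : (matchedset S Q prio c).filter (fun k => k ∈ Sset)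
          = Sset.filter (fun k => μ k = some c) := by
        ext k
        simp only [Finset.mem_filter, matchedset, Finset.mem_univ, true_and]
        constructor
        · rintro ⟨h1, h2⟩; exact ⟨h2, h1⟩
        · rintro ⟨h1, h2⟩; exact ⟨h2, h1⟩
      have hNeq : (matchedset S Q' prio c).filter (fun k => k ∈ Sset)
          = Sset.filter (fun k => ν k = some c) := by
        ext k
        simp only [Finset.mem_filter, matchedset, Finset.mem_univ, true_and]
        constructor
        · rintro ⟨h1, h2⟩; exact ⟨h2, h1⟩
        · rintro ⟨h1, h2⟩; exact ⟨h2, h1⟩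
      have hMsplit := Finset.card_filter_add_card_filter_not
        (s := matchedset S Q prio c) (p := fun k => k ∈ Sset)
      have hNsplit := Finset.card_filter_add_card_filter_not
        (s := matchedset S Q' prio c) (p := fun k => k ∈ Sset)
      have hMN : (matchedset S Q prio c).filter (fun k => ¬ k ∈ Sset) ⊆
          (matchedset S Q' prio c).filter (fun k => ¬ k ∈ Sset) := by
        intro k hk
        obtain ⟨hk1, hk2⟩ := Finset.mem_filter.1 hk
        have hμk : μ k = some c := (Finset.mem_filter.1 hk1).2
        have := hcase2 j hjS k (by rw [hμk, hνj])
        rcases this with h|h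
        · exact absurd h hk2
        · refine Finset.mem_filter.2 ⟨?_, hk2⟩
          refine Finset.mem_filter.2 ⟨Finset.mem_univ _, ?_⟩
          show ν k = some c
          rw [h, hνj]
      have hcMN := Finset.card_le_card hMN
      rw [hMeq] at hMsplit
      rw [hNeq] at hNsplit
      omega
    have hsum1 : Sset.card = ∑ α ∈ A, (Sset.filter (fun k => ν k = α)).card :=
      Finset.card_eq_sum_card_fiberwise (fun k hk => Finset.mem_image_of_mem ν hk)
    have hsum2 : (Sset.filter (fun k => μ k ∈ A)).card
        = ∑ α ∈ A, ((Sset.filter (fun k => μ k ∈ A)).filter (fun k => μ k = α)).card :=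
      Finset.card_eq_sum_card_fiberwise (fun k hk => (Finset.mem_filter.1 hk).2)
    have heqfib : ∀ α ∈ A, (Sset.filter (fun k => μ k ∈ A)).filter (fun k => μ k = α)
        = Sset.filter (fun k => μ k = α) := by
      intro α hα
      ext k
      simp only [Finset.mem_filter, and_assoc]
      constructor
      · rintro ⟨h1, -, h3⟩; exact ⟨h1, h3⟩
      · rintro ⟨h1, h3⟩; exact ⟨h1, by rw [h3]; exact hα, h3⟩
    have hsum2' : (Sset.filter (fun k => μ k ∈ A)).card
        = ∑ α ∈ A, (Sset.filter (fun k => μ k = α)).card := by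
      rw [hsum2]
      exact Finset.sum_congr rfl (fun α hα => by rw [heqfib α hα])
    have hchain : Sset.card ≤ (Sset.filter (fun k => μ k ∈ A)).card := by
      rw [hsum1, hsum2']
      exact Finset.sum_le_sum hfib
    have hSeq : Sset.filter (fun k => μ k ∈ A) = Sset :=
      Finset.eq_of_subset_of_card_le (Finset.filter_subset _ _) hchain
    have CNT : ∀ k ∈ Sset, ∃ j ∈ Sset, μ k = ν j := by
      intro k hk
      have : k ∈ Sset.filter (fun k => μ k ∈ A) := by rw [hSeq]; exact hk
      obtain ⟨j, hjS, hje⟩ := Finset.mem_image.1 (Finset.mem_filter.1 this).2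
      exact ⟨j, hjS, hje.symm⟩
    -- Temporal argument
    obtain ⟨kh, hkS, hkmax⟩ := Finset.exists_max_image Sset (arr S Q prio) ⟨i, iS⟩
    set T := arr S Q prio kh with hT
    obtain ⟨jh, hjhS, hμν⟩ := CNT kh hkS
    obtain ⟨ch, hνjh, hidxjh, hgetjh⟩ := F2 jh hjhS
    have hμkh : μ kh = some ch := by rw [hμν, hνjh]
    obtain ⟨hpfkh, hgetkh⟩ := spda_some_elim S Q prio hμkh
    have hkj : kh ≠ jh := by
      intro he
      have h1 := F1 kh
      have h2 := (Finset.mem_filter.1 hkS).2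
      rw [show μ kh = ν kh by rw [hμν, ← he]] at h1
      omega
    obtain ⟨r, hrN, hitr, hrej⟩ := reach S Q prio jh hidxjh
    have hpropjh : proposesTo Q (it S Q prio r) jh = some ch := by
      show (Q jh)[it S Q prio r jh]? = some ch
      rw [hitr]; exact hgetjh
    have hrcnt := rej_to_cnt S Q prio hpropjh hrej
    have hrarr : r < arr S Q prio jh := by
      by_contra hx
      push_neg at hx
      have hmn := it_mono S Q prio hx jh
      rw [arr_spec] at hmn
      omega
    have hrT : r < T := lt_of_lt_of_le hrarr (hkmax jh hjhS)
    have hitT : it S Q prio T kh = pf S Q prio kh := arr_spec S Q prio kh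
    have hpropkh : proposesTo Q (it S Q prio T) kh = some ch := by
      show (Q kh)[it S Q prio T kh]? = some ch
      rw [hitT]; exact hgetkh
    have hitT1 : it S Q prio (T-1) kh < pf S Q prio kh := lt_arr S Q prio i (by omega)
    have hnpropT1 : proposesTo Q (it S Q prio (T-1)) kh ≠ some ch := by
      intro hx
      have := nodup_getElem?_inj (hnd kh) hx hgetkh
      omega
    have hknr : ¬ isRejected S Q prio (it S Q prio T) kh := by
      intro hx
      have h1 : it S Q prio (T+1) kh = it S Q prio T kh + 1 := by
        rw [it_succ]; unfold daStep; rw [if_pos hx]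
      have h2 := it_le_pf S Q prio i (T+1) kh
      omega
    have hpriojk : prio ch jh < prio ch kh := by
      have hnep : prio ch kh ≠ prio ch jh := fun hx => hkj (hprio ch hx)
      rcases lt_or_gt_of_ne hnep with hlt|hgt
      · exfalso
        have hcT : S ch ≤ (cntset S Q prio ch (prio ch jh) T).card :=
          cnt_mono S Q prio (hprio ch) (le_of_lt hrT) hrcnt
        have hsub : cntset S Q prio ch (prio ch jh) T ⊆
            cntset S Q prio ch (prio ch kh) T := by
          intro m hm
          obtain ⟨-, hm1, hm2⟩ := Finset.mem_filter.1 hm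
          exact Finset.mem_filter.2 ⟨Finset.mem_univ _, hm1, lt_trans hlt hm2⟩
        exact hknr (mk_rejected S Q prio hpropkh
          (le_trans hcT (Finset.card_le_card hsub)))
      · exact hgt
    have hcntT1 : S ch ≤ (cntset S Q prio ch (prio ch jh) (T-1)).card :=
      cnt_mono S Q prio (hprio ch) (by omega) hrcnt
    obtain ⟨K, hK1, hK2, hK3⟩ := cnt_key S Q prio (hprio ch) hcntT1
    rw [show T - 1 + 1 = T by omega] at hK1
    have hkhK : kh ∉ K := fun hx => hnpropT1 (hK3 kh hx)
    have hkhcnt : kh ∈ cntset S Q prio ch (prio ch jh) T :=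
      Finset.mem_filter.2 ⟨Finset.mem_univ _, hpropkh, hpriojk⟩
    have hbig : S ch + 1 ≤ (cntset S Q prio ch (prio ch jh) T).card := by
      have hins : insert kh K ⊆ cntset S Q prio ch (prio ch jh) T :=
        Finset.insert_subset hkhcnt hK1
      have := Finset.card_le_card hins
      rw [Finset.card_insert_of_notMem hkhK] at this
      omega
    have hnecnt : (cntset S Q prio ch (prio ch jh) T).Nonempty :=
      Finset.card_pos.1 (by omega)
    obtain ⟨st, hstmem, hstmin⟩ :=
      Finset.exists_min_image (cntset S Q prio ch (prio ch jh) T) (prio ch) hnecnt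
    obtain ⟨hstprop, hstgt⟩ := (Finset.mem_filter.1 hstmem).2
    have hstrej : isRejected S Q prio (it S Q prio T) st := by
      apply mk_rejected S Q prio hstprop
      have hsub : (cntset S Q prio ch (prio ch jh) T).erase st ⊆
          cntset S Q prio ch (prio ch st) T := by
        intro m hm
        obtain ⟨hmh, hmm⟩ := Finset.mem_erase.1 hm
        obtain ⟨-, hprop, -⟩ := Finset.mem_filter.1 hmm
        refine Finset.mem_filter.2 ⟨Finset.mem_univ _, hprop, ?_⟩
        rcases lt_or_eq_of_le (hstmin m hmm) with hx|hx
        · exact hx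
        · exact (hmh (hprio ch hx).symm).elim
      refine le_trans ?_ (Finset.card_le_card hsub)
      rw [Finset.card_erase_of_mem hstmem]
      omega
    have hstkh : st ≠ kh := fun he => hknr (he ▸ hstrej)
    have hstget : (Q st)[it S Q prio T st]? = some ch := hstprop
    have hstep : it S Q prio (T+1) st = it S Q prio T st + 1 := by
      rw [it_succ]; unfold daStep; rw [if_pos hstrej]
    have hqhpf : it S Q prio T st < pf S Q prio st := by
      have := it_le_pf S Q prio i (T+1) st
      omega
    have hstS : st ∉ Sset := by
      intro hx
      have harr := hkmax st hx
      have hmn := it_mono S Q prio harr st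
      rw [arr_spec] at hmn
      omega
    have hsti : st ≠ i := fun he => hstS (he ▸ iS)
    refine envy st (it S Q prio T st) ch jh hsti ?_ hstget hνjh hstgt
    have hge : pf S Q prio st ≤ posO (Q st) (ν st) := by
      by_contra hx
      push_neg at hx
      exact hstS (Finset.mem_filter.2 ⟨Finset.mem_univ _, hx⟩)
    omega


end DAAux

namespace SROL

variable {C : Type} [DecidableEq C] (T : Finset C)

lemma cons (a : C) (l : List C) :
    subROL (a :: l) T =
      (if a ∈ T then [(a, false), (a, true)] else [(a, false)]) ++ subROL l T := by
  simp [subROL]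

lemma mem_fst {l : List C} {x : C × Bool} (hx : x ∈ subROL l T) : x.1 ∈ l := by
  induction l with
  | nil => simp [subROL] at hx
  | cons a l ih =>
    rw [cons] at hx
    rcases List.mem_append.1 hx with h|h
    · split at h <;> simp_all <;> rcases h with h|h <;> simp [h]
    · exact List.mem_cons_of_mem _ (ih h)

lemma nodup {l : List C} (hl : l.Nodup) : (subROL l T).Nodup := by
  induction l with
  | nil => simp [subROL]
  | cons a l ih =>
    rw [cons]
    obtain ⟨ha, hl'⟩ := List.nodup_cons.1 hl
    refine List.Nodup.append ?_ (ih hl') ?_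
    · split <;> simp
    · intro x hx hx'
      have h1 : x.1 = a := by
        split at hx <;> simp_all <;> rcases hx with h|h <;> simp [h]
      exact ha (h1 ▸ mem_fst T hx')

lemma pairwise (u : Option C → ℝ) {l : List C}
    (hl : l.Pairwise fun a b => u (some b) < u (some a)) :
    (subROL l T).Pairwise fun x y => u (some y.1) ≤ u (some x.1) := by
  induction l with
  | nil => simp [subROL]
  | cons a l ih =>
    rw [cons]
    obtain ⟨ha, hl'⟩ := List.pairwise_cons.1 hl
    refine List.pairwise_append.2 ⟨?_, ih hl', ?_⟩
    · split <;> simp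
    · intro x hx y hy
      have h1 : x.1 = a := by
        split at hx <;> simp_all <;> rcases hx with h|h <;> simp [h]
      have h2 : y.1 ∈ l := mem_fst T hy
      exact le_of_lt (h1 ▸ ha y.1 h2)

end SROL

section Helper
variable {C : Type}

lemma pairwise_le_getElem? (l : List (C × Bool)) (u : Option C → ℝ)
    (hpw : l.Pairwise fun x y => u (some y.1) ≤ u (some x.1))
    {p q : ℕ} {x y : C × Bool} (hx : l[p]? = some x) (hy : l[q]? = some y)
    (hpq : p ≤ q) : u (some y.1) ≤ u (some x.1) := by
  obtain ⟨hp, hxe⟩ := List.getElem?_eq_some_iff.1 hx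
  obtain ⟨hq, hye⟩ := List.getElem?_eq_some_iff.1 hy
  rcases lt_or_eq_of_le hpq with h|h
  · have := List.pairwise_iff_getElem.1 hpw p q hp hq h
    rw [hxe, hye] at this
    exact this
  · subst h
    rw [← hxe, ← hye]

end Helper


/-- **DAVID-Q is ordinally strategy-proof**: for every student `i`, every profile of
sub-college rank-ordered lists of the other students, and every set `T ⊆ C` of colleges
whose disclosure sub-colleges `i` includes, the outcome `i` receives from submitting the
sub-college list `subROL Ltrue T` — the regular sub-colleges of all colleges in the
order of her true preferences `u`, with each disclosure sub-college of a `c ∈ T` placed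
immediately after `c`'s regular sub-college — is weakly preferred, under her true
preferences, to her outcome from submitting any other rank-ordered list `L` of the same
set of sub-colleges in a different order (i.e. any permutation of `subROL Ltrue T`). -/
theorem DAVIDQ_ordinally_strategyproof
    {I C : Type} [Fintype I] [DecidableEq I] [DecidableEq C] [Fintype C]
    (Sr Sd : C → ℕ) (e w : I → C → ℝ)
    (he : ∀ c : C, Function.Injective fun i : I => e i c)
    (hw : ∀ c : C, Function.Injective fun i : I => w i c)
    (i : I) (u : Option C → ℝ) (hu : Function.Injective u)
    (R : I → List (C × Bool)) (hR : ∀ j : I, (R j).Nodup)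
    (Ltrue : List C) (hLtrue : IsTruthfulROL u Ltrue)
    (T : Finset C)
    (L : List (C × Bool)) (hL : L.Perm (subROL Ltrue T)) :
    u (Option.map Prod.fst
        (SPDA (subCap Sr Sd) (Function.update R i L) (subPrio e w) i)) ≤
      u (Option.map Prod.fst
        (SPDA (subCap Sr Sd) (Function.update R i (subROL Ltrue T)) (subPrio e w) i)) := by
  classical
  have hprio : ∀ s : C × Bool, Function.Injective (subPrio e w s) := by
    rintro ⟨c0, b0⟩
    cases b0
    · intro a b hab
      have hab' : e a c0 = e b c0 := by simpa [subPrio] using hab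
      exact he c0 hab'
    · intro a b hab
      have hab' : w a c0 = w b c0 := by simpa [subPrio] using hab
      exact hw c0 hab' 
  set S : C × Bool → ℕ := subCap Sr Sd with hS
  set prio : C × Bool → I → ℝ := subPrio e w with hprio0
  set SL := subROL Ltrue T with hSL
  have hndLt : Ltrue.Nodup := by
    refine List.Pairwise.imp ?_ hLtrue.2
    intro a b hab he'
    rw [he'] at hab
    exact lt_irrefl _ hab
  have hndSL : SL.Nodup := SROL.nodup T hndLt
  have hndL : L.Nodup := (hL.nodup_iff).2 hndSL
  set P : I → List (C × Bool) := Function.update R i SL with hP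
  set P' : I → List (C × Bool) := Function.update R i L with hP'
  have hPi : P i = SL := Function.update_self _ _ _
  have hP'i : P' i = L := Function.update_self _ _ _
  have hndP : ∀ j, (P j).Nodup := by
    intro j; by_cases hj : j = i
    · subst hj; rw [hPi]; exact hndSL
    · rw [hP, Function.update_of_ne hj]; exact hR j
  have hndP' : ∀ j, (P' j).Nodup := by
    intro j; by_cases hj : j = i
    · subst hj; rw [hP'i]; exact hndL
    · rw [hP', Function.update_of_ne hj]; exact hR j
  have hQ : ∀ j, j ≠ i → P j = P' j := by
    intro j hj; rw [hP, hP', Function.update_of_ne hj, Function.update_of_ne hj]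
  have hQ' : ∀ j, j ≠ i → P' j = P j := fun j hj => (hQ j hj).symm
  have b1 := DAAux.block S prio hprio i P P' hQ hndP hndP'
  have b2 := DAAux.block S prio hprio i P' P hQ' hndP' hndP
  show u (Option.map Prod.fst (SPDA S P' prio i)) ≤ u (Option.map Prod.fst (SPDA S P prio i))
  cases hν : SPDA S P' prio i with
  | none =>
    cases hμ : SPDA S P prio i with
    | none => simp
    | some x =>
      exfalso
      obtain ⟨hpfx, hgetx⟩ := DAAux.spda_some_elim S P prio hμ
      have hxSL : x ∈ SL := by
        rw [hPi] at hgetx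
        exact List.mem_of_getElem? hgetx
      have hxL : x ∈ L := (hL.mem_iff).2 hxSL
      have hpf' : DAAux.pf S P' prio i = (P' i).length := by
        have h1 := DAAux.pf_le_len S P' prio i
        have h2 : (P' i)[DAAux.pf S P' prio i]? = none := hν
        have h3 := List.getElem?_eq_none_iff.1 h2
        omega
      rw [hμ] at b2
      have hidx : DAAux.posO (P' i) (some x) < (P' i).length :=
        DAAux.posO_some_lt_of_mem (by rw [hP'i]; exact hxL)
      omega
  | some s =>
    obtain ⟨hpfs, hgets⟩ := DAAux.spda_some_elim S P' prio hν
    have hsL : s ∈ L := by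
      rw [hP'i] at hgets
      exact List.mem_of_getElem? hgets
    have hsSL : s ∈ SL := (hL.mem_iff).1 hsL
    have hposlt : DAAux.posO SL (some s) < SL.length := DAAux.posO_some_lt_of_mem hsSL
    rw [hν, hPi] at b1
    have hpfP : DAAux.pf S P prio i < (P i).length := by
      rw [hPi]; omega
    have hμx : SPDA S P prio i = some ((P i)[DAAux.pf S P prio i]) :=
      List.getElem?_eq_getElem hpfP
    rw [hμx]
    simp only [Option.map_some]
    have hgetμ : SL[DAAux.pf S P prio i]? = some ((P i)[DAAux.pf S P prio i]) := by
      rw [← hPi]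
      exact List.getElem?_eq_getElem hpfP
    have hgets' : SL[DAAux.posO SL (some s)]? = some s := DAAux.getElem?_posO hsSL
    have hpw := SROL.pairwise T u hLtrue.2
    exact pairwise_le_getElem? SL u hpw hgetμ hgets' b1


end
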